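/- In the one-factor model with no regressors, if y_{ih} = λ_i f_h + u_{ih}, E(λ_i u_{ij}) = 0, E(u_{ih} u_{ij}) = 0 for h in the instrument set B and j in A₀ ∪ A_J, and f_h is a constant, then E(y_{ih}·v_{ij}) = 0 where v_{ij} = u_{ij} − θ_j·ū_{iA_J} and ū_{iA_J} is an average of u_{ik} over k in A_J (with B ∩ A_J = ∅). That is, the internally generated instrument y_{ih} is uncorrelated with the composite error v_{ij}. -/

import Mathlib

open MeasureTheory Finset

lemma int_mul' {Ω : Type*} [MeasurableSpace Ω] {μ : Measure Ω} {f g : Ω → ℝ}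
    (hf : MemLp f 2 μ) (hg : MemLp g 2 μ) :
    Integrable (fun ω => f ω * g ω) μ := by
  have h2 : (1 : ENNReal) / 1 = 1 / 2 + 1 / 2 := by
    simp [ENNReal.inv_two_add_inv_two]
  have : MemLp (f • g) 1 μ := hg.smul hf
  exact memLp_one_iff_integrable.mp this

/-- In the one-factor model with no regressors, the internally generated
instrument `y_{ih} = λ f_h + u_{ih}` (for `h` in the instrument set `B`) is
uncorrelated with the composite error `v_{ij} = u_{ij} - θ_j ū_{iA_J}`
(for `j ∈ A₀ ∪ A_J`). -/
theorem stmt_4 {Ω : Type*} [MeasurableSpace Ω] (μ : Measure Ω) [IsProbabilityMeasure μ]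
    (J : ℕ) (lam : Ω → ℝ) (u : ℕ → Ω → ℝ) (f : ℕ → ℝ) (θ : ℕ → ℝ)
    (A0 AJ B : Finset ℕ)
    (hA0AJ : Disjoint A0 AJ) (hA0B : Disjoint A0 B) (hAJB : Disjoint AJ B)
    (hAJne : AJ.Nonempty)
    (hlam : MemLp lam 2 μ) (hu : ∀ k, MemLp (u k) 2 μ)
    (hlamu : ∀ k, ∫ ω, lam ω * u k ω ∂μ = 0)
    (huu : ∀ h ∈ B, ∀ k ∈ A0 ∪ AJ, ∫ ω, u h ω * u k ω ∂μ = 0)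
    (h : ℕ) (hhB : h ∈ B) (j : ℕ) (hj : j ∈ A0 ∪ AJ) :
    ∫ ω, (lam ω * f h + u h ω) *
        (u j ω - θ j * ((AJ.card : ℝ)⁻¹ * ∑ k ∈ AJ, u k ω)) ∂μ = 0 := by
  have hilu : ∀ k, Integrable (fun ω => lam ω * u k ω) μ := fun k => int_mul' hlam (hu k)
  have hiuu : ∀ k, Integrable (fun ω => u h ω * u k ω) μ := fun k => int_mul' (hu h) (hu k)
  have hterm : ∀ k, Integrable (fun ω => f h * (lam ω * u k ω) + u h ω * u k ω) μ :=
    fun k => ((hilu k).const_mul _).add (hiuu k)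
  have hsum : Integrable (fun ω => ∑ k ∈ AJ, (f h * (lam ω * u k ω) + u h ω * u k ω)) μ :=
    integrable_finset_sum _ fun k _ => hterm k
  have key : (fun ω => (lam ω * f h + u h ω) *
        (u j ω - θ j * ((AJ.card : ℝ)⁻¹ * ∑ k ∈ AJ, u k ω)))
      = fun ω => (f h * (lam ω * u j ω) + u h ω * u j ω)
        - (θ j * (AJ.card : ℝ)⁻¹) * ∑ k ∈ AJ, (f h * (lam ω * u k ω) + u h ω * u k ω) := by
    funext ω
    simp only [Finset.sum_add_distrib, ← Finset.mul_sum]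
    ring
  rw [key, integral_sub (hterm j) (hsum.const_mul _), integral_const_mul,
    integral_finset_sum _ fun k _ => hterm k]
  have hz : ∀ k ∈ A0 ∪ AJ, ∫ ω, (f h * (lam ω * u k ω) + u h ω * u k ω) ∂μ = 0 := by
    intro k hk
    rw [integral_add ((hilu k).const_mul _) (hiuu k), integral_const_mul, hlamu k,
      huu h hhB k hk, mul_zero, add_zero]
  rw [hz j hj, Finset.sum_congr rfl (fun k hk => hz k (Finset.mem_union_right _ hk)),
    Finset.sum_const, smul_zero, mul_zero, sub_zero]
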